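/- Let Λ be a finite graph where each edge e carries a real weight ∠(e), and suppose every semi-embedded closed walk has total weight > 2π. Then there exists ν₀ > 2π such that every closed walk in Λ that is immersed (no backtracking) and essential has total weight ≥ ν₀; consequently any closed immersed essential walk σ satisfies |σ|_∠ > 2π, since every such walk decomposes as a concatenation of semi-embedded closed walks. -/

import Mathlib

open Real

section Aux

variable {V : Type*} {Λ : SimpleGraph V}

/-- Split a walk at the first occurrence of a dart. -/
lemma walk_split_at_dart : ∀ {a b : V} (p : Λ.Walk a b) (d : Λ.Dart), d ∈ p.darts →
    ∃ (q : Λ.Walk a d.fst) (r : Λ.Walk d.snd b),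
      p.darts = q.darts ++ d :: r.darts ∧
      p.edges = q.edges ++ d.edge :: r.edges ∧
      p.length = q.length + 1 + r.length ∧
      d ∉ q.darts := by
  intro a b p
  induction p with
  | nil => intro d hd; simp at hd
  | cons h p ih =>
    intro d hd
    rename_i u x y
    rw [SimpleGraph.Walk.darts_cons, List.mem_cons] at hd
    by_cases hda : d = ⟨(u, x), h⟩
    · subst hda
      exact ⟨SimpleGraph.Walk.nil, p, by simp, by simp [SimpleGraph.Dart.edge],
        by simp [Nat.add_comm], by simp⟩
    · rcases hd with hd | hd
      · exact absurd hd hda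
      · obtain ⟨q, r, h1, h2, h3, h4⟩ := ih d hd
        refine ⟨SimpleGraph.Walk.cons h q, r, ?_, ?_, ?_, ?_⟩
        · simp [h1]
        · simp [h2]
        · simp [h3]; omega
        · simp only [SimpleGraph.Walk.darts_cons, List.mem_cons, not_or]
          exact ⟨hda, h4⟩

/-- If a closed walk has a duplicated dart, it splits into two shorter nontrivial
closed walks whose weights add up. -/
lemma walk_extract [DecidableEq V] (w : Sym2 V → ℝ) (v : V) (σ : Λ.Walk v v)
    (h : ¬ σ.darts.Nodup) :
    ∃ (u : V) (m : Λ.Walk u u) (o : Λ.Walk v v),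
      m.length ≠ 0 ∧ o.length ≠ 0 ∧ m.length < σ.length ∧ o.length < σ.length ∧
      (σ.edges.map w).sum = (m.edges.map w).sum + (o.edges.map w).sum := by
  obtain ⟨d, hd⟩ := List.exists_duplicate_iff_not_nodup.2 h
  rw [List.duplicate_iff_two_le_count] at hd
  obtain ⟨q, r, hq1, hq2, hq3, hq4⟩ := walk_split_at_dart σ d
    (List.count_pos_iff.1 (by omega))
  have hdr : d ∈ r.darts := by
    rw [hq1] at hd
    rw [List.count_append, List.count_cons_self, List.count_eq_zero_of_not_mem hq4] at hd
    exact List.count_pos_iff.1 (by omega)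
  obtain ⟨s, t, hs1, hs2, hs3, _⟩ := walk_split_at_dart r d hdr
  refine ⟨d.fst, SimpleGraph.Walk.cons d.adj s, q.append (SimpleGraph.Walk.cons d.adj t),
    by simp, by simp,
    by rw [SimpleGraph.Walk.length_cons, hq3, hs3]; omega,
    by rw [SimpleGraph.Walk.length_append, SimpleGraph.Walk.length_cons, hq3, hs3]; omega, ?_⟩
  have hde : s(d.fst, d.snd) = d.edge := by
    simp [SimpleGraph.Dart.edge]
  simp only [hq2, hs2, SimpleGraph.Walk.edges_append, SimpleGraph.Walk.edges_cons, hde,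
    List.map_append, List.map_cons, List.sum_append, List.sum_cons]
  ring

end Aux

/-- Strong induction: any lower bound on weights of nodup-dart closed walks (which is
nonnegative) bounds the weight of every nontrivial closed walk. -/
lemma walk_weight_ge {V : Type*} [DecidableEq V] {Λ : SimpleGraph V}
    (w : Sym2 V → ℝ) (c : ℝ) (hc0 : 0 ≤ c)
    (hc : ∀ (v : V) (σ : Λ.Walk v v), σ.length ≠ 0 → σ.darts.Nodup →
      c ≤ (σ.edges.map w).sum) :
    ∀ (n : ℕ) (v : V) (σ : Λ.Walk v v), σ.length = n → σ.length ≠ 0 →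
      c ≤ (σ.edges.map w).sum := by
  intro n
  induction n using Nat.strong_induction_on with
  | _ n ih =>
    intro v σ hlen hne
    by_cases hnd : σ.darts.Nodup
    · exact hc v σ hne hnd
    · obtain ⟨u, m, o, hm0, ho0, hmlt, holt, hsum⟩ := walk_extract w v σ hnd
      have h1 : c ≤ (m.edges.map w).sum := ih m.length (hlen ▸ hmlt) u m rfl hm0
      have h2 : c ≤ (o.edges.map w).sum := ih o.length (hlen ▸ holt) v o rfl ho0
      rw [hsum]
      linarith

/-- Let `Λ` be a finite graph with a real weight on each edge, and suppose every
nontrivial semi-embedded closed walk (traversing each edge at most once in each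
direction) has total weight `> 2π`.  Then there is `ν₀ > 2π` such that every
essential closed walk that is immersed (no backtracking, including cyclically)
has total weight `≥ ν₀`; in particular its weight is `> 2π`. -/
theorem link_weight_test {V : Type*} [Fintype V] [DecidableEq V]
    (Λ : SimpleGraph V) [DecidableRel Λ.Adj]
    (w : Sym2 V → ℝ)
    (hsemi : ∀ (v : V) (σ : Λ.Walk v v), σ.length ≠ 0 → σ.darts.Nodup →
      2 * π < (σ.edges.map w).sum) :
    ∃ ν₀ : ℝ, 2 * π < ν₀ ∧
      ∀ (v : V) (σ : Λ.Walk v v), σ.length ≠ 0 →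
        List.Chain' (fun d e => e ≠ d.symm) (σ.darts ++ σ.darts.take 1) →
        ν₀ ≤ (σ.edges.map w).sum ∧ 2 * π < (σ.edges.map w).sum := by
  classical
  set N : ℕ := Fintype.card Λ.Dart with hN
  -- the set of weights of nontrivial semi-embedded closed walks
  set S : Set ℝ :=
    {x | ∃ (v : V) (σ : Λ.Walk v v), σ.length ≠ 0 ∧ σ.darts.Nodup ∧
      (σ.edges.map w).sum = x} with hS
  have hSfin : S.Finite := by
    have : S ⊆ (fun p : Σ v : V, {p : Λ.Walk v v | p.length < N + 1} =>
        ((p.2.1.edges.map w).sum)) '' Set.univ := by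
      rintro x ⟨v, σ, hne, hnd, rfl⟩
      have hlen : σ.length < N + 1 := by
        have := hnd.length_le_card
        simpa [SimpleGraph.Walk.length_darts] using Nat.lt_succ_of_le this
      exact ⟨⟨v, σ, hlen⟩, Set.mem_univ _, rfl⟩
    exact Set.Finite.subset (Set.Finite.image _ (Set.toFinite _)) this
  by_cases hne : S.Nonempty
  · -- take the minimum
    obtain ⟨ν₀, hν₀S, hν₀min'⟩ := Set.Finite.exists_minimalFor id S hSfin hne
    have hν₀min : ∀ a ∈ S, id a ≤ id ν₀ → id ν₀ = id a :=
      fun a ha h => le_antisymm (hν₀min' ha h) h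
    have hν₀gt : 2 * π < ν₀ := by
      obtain ⟨v, σ, h1, h2, h3⟩ := hν₀S
      exact h3 ▸ hsemi v σ h1 h2
    refine ⟨ν₀, hν₀gt, fun v σ hσ _ => ?_⟩
    have hlow : ∀ (u : V) (τ : Λ.Walk u u), τ.length ≠ 0 → τ.darts.Nodup →
        ν₀ ≤ (τ.edges.map w).sum := by
      intro u τ h1 h2
      have hmem : (τ.edges.map w).sum ∈ S := ⟨u, τ, h1, h2, rfl⟩
      by_contra hlt
      push_neg at hlt
      exact absurd (hν₀min _ hmem (le_of_lt hlt)) (by simpa using ne_of_gt hlt)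
    have h0 : (0 : ℝ) ≤ ν₀ := le_of_lt (lt_trans (by positivity) hν₀gt)
    have := walk_weight_ge w ν₀ h0 hlow σ.length v σ rfl hσ
    exact ⟨this, lt_of_lt_of_le hν₀gt this⟩
  · -- no semi-embedded closed walks at all; then no nontrivial closed walks
    refine ⟨2 * π + 1, by linarith, fun v σ hσ _ => ?_⟩
    have hlow : ∀ (u : V) (τ : Λ.Walk u u), τ.length ≠ 0 → τ.darts.Nodup →
        2 * π + 1 ≤ (τ.edges.map w).sum := by
      intro u τ h1 h2
      exact absurd ⟨(τ.edges.map w).sum, u, τ, h1, h2, rfl⟩ hne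
    have h0 : (0 : ℝ) ≤ 2 * π + 1 := by positivity
    have := walk_weight_ge w (2 * π + 1) h0 hlow σ.length v σ rfl hσ
    exact ⟨this, by linarith⟩
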